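/- In the setting of A = O·1 ⊕ μ·X over a Dedekind domain O with μ² = (z), X² = z⁻¹ā X + z⁻¹b̄, with ker(m) = X_μ ⊕ O·X̂ as above: if b̄ is a unit of O, then ker(m) is a free A-module of rank one generated by X̂, where A acts on A ⊗_O A via the left tensor factor. -/

import Mathlib

/-- The element of `K⁴` (coordinates `1⊗1, 1⊗X, X⊗1, X⊗X`) representing `p ⊗ q`. -/
def tens {K : Type*} [Field K] (p q : K × K) : Fin 4 → K :=
  ![p.1 * q.1, p.1 * q.2, p.2 * q.1, p.2 * q.2]

/-- The multiplication map `m : K² ⊗ K² → K²` for `X² = aX + b`, in coordinates. -/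
noncomputable def mulMap {K : Type*} [Field K] (a b : K) : (Fin 4 → K) →ₗ[K] K × K :=
  LinearMap.prod
    ((LinearMap.proj (0 : Fin 4) : (Fin 4 → K) →ₗ[K] K) +
      b • (LinearMap.proj (3 : Fin 4) : (Fin 4 → K) →ₗ[K] K))
    ((LinearMap.proj (1 : Fin 4) : (Fin 4 → K) →ₗ[K] K) +
      (LinearMap.proj (2 : Fin 4) : (Fin 4 → K) →ₗ[K] K) +
      a • (LinearMap.proj (3 : Fin 4) : (Fin 4 → K) →ₗ[K] K))

/-- `X_v = vX ⊗ 1 − 1 ⊗ vX` in coordinates. -/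
def Xel {K : Type*} [Field K] (v : K) : Fin 4 → K := ![0, -v, v, 0]

/-- Left multiplication `ℓ_x` by `x = x₁·1 + x₂·X` on the first tensor factor,
in the coordinates `1⊗1, 1⊗X, X⊗1, X⊗X`, for `X² = aX + b`. -/
def ellOp {K : Type*} [Field K] (a b : K) (x : K × K) (c : Fin 4 → K) : Fin 4 → K :=
  ![x.1 * c 0 + b * (x.2 * c 2), x.1 * c 1 + b * (x.2 * c 3),
    x.2 * c 0 + x.1 * c 2 + a * (x.2 * c 2), x.2 * c 1 + x.1 * c 3 + a * (x.2 * c 3)]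

/-- If `b̄` is a unit of `O`, then `ker(m)` is a free `A`-module of rank one generated
by `X̂`: the map `A → ker(m)`, `x ↦ ℓ_x(X̂)`, is well defined and bijective onto
`ker(m) = AA ⊓ ker(mulMap)`, where `A` acts through the left tensor factor. -/
theorem stmt9 (O : Type*) [CommRing O] [IsDomain O] [IsDedekindDomain O]
    (K : Type*) [Field K] [Algebra O K] [IsFractionRing O K]
    (μ : Ideal O) (hμ : μ ≠ ⊥)
    (z : O) (hsq : μ * μ = Ideal.span {z})
    (abar bbar : O) (habar : abar ∈ μ) (hbbar : IsUnit bbar)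
    (k : ℕ) (u u' : Fin k → O)
    (hu : ∀ j, u j ∈ μ) (hu' : ∀ j, u' j ∈ μ)
    (hspan : Ideal.span (Set.range u) = μ)
    (hsum : ∑ j, u j * u' j = z) :
    let f : O → K := algebraMap O K
    let a : K := f abar / f z
    let b : K := f bbar / f z
    let O1 : Submodule O K := LinearMap.range (Algebra.linearMap O K)
    let μK : Submodule O K := Submodule.map (Algebra.linearMap O K) μ
    let A : Submodule O (K × K) := O1.prod μK
    let AA : Submodule O (Fin 4 → K) :=
      Submodule.span O {w | ∃ p ∈ A, ∃ q ∈ A, w = tens p q}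
    let Kerm : Submodule O (Fin 4 → K) :=
      AA ⊓ LinearMap.ker ((mulMap a b).restrictScalars O)
    let Xhat : Fin 4 → K :=
      (∑ j, tens ((0 : K), f (u j)) ((0 : K), f (u' j))) -
        (tens ((0 : K), f abar) ((1 : K), (0 : K)) +
          tens (f bbar, (0 : K)) ((1 : K), (0 : K)))
    (∀ x : A, ellOp a b (x : K × K) Xhat ∈ Kerm) ∧
    Function.Injective (fun x : A => ellOp a b (x : K × K) Xhat) ∧
    ∀ w ∈ Kerm, ∃ x ∈ A, ellOp a b x Xhat = w := by
  intro f a b O1 μK A AA Kerm Xhat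
  have ha : a = f abar / f z := rfl
  have hb : b = f bbar / f z := rfl
  have hf : Function.Injective f := IsFractionRing.injective O K
  have hz : z ≠ 0 := by
    intro h
    apply hμ
    have : μ * μ = ⊥ := by
      rw [hsq, h, Ideal.span_singleton_eq_bot.mpr rfl]
    rcases Ideal.mul_eq_bot.mp this with h' | h' <;> exact h'
  have hZ : f z ≠ 0 := (map_ne_zero_iff (algebraMap O K) hf).mpr hz
  have hB : f bbar ≠ 0 := (map_ne_zero_iff (algebraMap O K) hf).mpr hbbar.ne_zero
  -- explicit form of Xhat
  have hXhat : Xhat = ![-f bbar, 0, -f abar, f z] := by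
    funext i
    simp only [Xhat, Pi.sub_apply, Pi.add_apply, Finset.sum_apply]
    fin_cases i <;> simp [tens]
    rw [← hsum]
    show ∑ x : Fin k, (algebraMap O K) (u x) * (algebraMap O K) (u' x) = (algebraMap O K) (∑ j : Fin k, u j * u' j)
    rw [map_sum]
    exact Finset.sum_congr rfl fun j _ => (map_mul _ _ _).symm
  -- membership helpers
  have hmemO1 : ∀ o : O, f o ∈ O1 := fun o => ⟨o, rfl⟩
  have hmemμK : ∀ {m : O}, m ∈ μ → f m ∈ μK := fun hm => ⟨_, hm, rfl⟩
  have hgen : ∀ p ∈ A, ∀ q ∈ A, tens p q ∈ AA :=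
    fun p hp q hq => Submodule.subset_span ⟨p, hp, q, hq, rfl⟩
  have h1A : ((1 : K), (0 : K)) ∈ A :=
    Submodule.mem_prod.mpr ⟨⟨1, by simp⟩, zero_mem _⟩
  have hXAA : Xhat ∈ AA := by
    refine sub_mem (Submodule.sum_mem _ fun j _ => hgen _ ?_ _ ?_)
      (add_mem (hgen _ ?_ _ h1A) (hgen _ ?_ _ h1A))
    · exact Submodule.mem_prod.mpr ⟨zero_mem _, hmemμK (hu j)⟩
    · exact Submodule.mem_prod.mpr ⟨zero_mem _, hmemμK (hu' j)⟩
    · exact Submodule.mem_prod.mpr ⟨zero_mem _, hmemμK habar⟩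
    · exact Submodule.mem_prod.mpr ⟨hmemO1 bbar, zero_mem _⟩
  have hmulMap : ∀ c : Fin 4 → K, mulMap a b c = (c 0 + b * c 3, c 1 + c 2 + a * c 3) := by
    intro c
    simp [mulMap, smul_eq_mul]
  have hkerall : ∀ x : K × K, mulMap a b (ellOp a b x Xhat) = 0 := by
    intro x
    rw [hmulMap, hXhat]
    simp only [ha, hb, ellOp, Matrix.cons_val_zero, Matrix.cons_val_one, Matrix.head_cons,
      Matrix.cons_val_two, Matrix.tail_cons, Matrix.cons_val_three, Matrix.cons_val_fin_one,
      Prod.mk_eq_zero]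
    constructor
    · field_simp [hZ]
      ring
    · field_simp [hZ]
      ring
  -- key decomposition of ℓ_x(X̂)
  have hkey : ∀ (o m s : O), f m * f abar = f z * f s →
      ellOp a b (f o, f m) Xhat = (o + s) • Xhat +
        (tens ((1 : K), (0 : K)) ((0 : K), f m * f bbar) -
          tens ((0 : K), f m * f bbar) ((1 : K), (0 : K))) := by
    intro o m s hms
    rw [hXhat]
    funext i
    have SIMP : True := trivial
    fin_cases i
    · simp only [ha, hb, ellOp, tens, Pi.add_apply, Pi.sub_apply, Pi.smul_apply, Algebra.smul_def,
        map_add, map_mul, Matrix.cons_val_zero, Matrix.cons_val_one, Matrix.head_cons,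
        Matrix.cons_val_two, Matrix.tail_cons, Matrix.cons_val_three, Matrix.cons_val_fin_one,
        Fin.reduceFinMk, Pi.mul_apply, Pi.algebraMap_apply]
      field_simp [hZ]
      linear_combination (-(f bbar)) * hms
    · simp only [ha, hb, ellOp, tens, Pi.add_apply, Pi.sub_apply, Pi.smul_apply, Algebra.smul_def,
        map_add, map_mul, Matrix.cons_val_zero, Matrix.cons_val_one, Matrix.head_cons,
        Matrix.cons_val_two, Matrix.tail_cons, Matrix.cons_val_three, Matrix.cons_val_fin_one,
        Fin.reduceFinMk, Pi.mul_apply, Pi.algebraMap_apply]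
      field_simp [hZ]
      ring
    · simp only [ha, hb, ellOp, tens, Pi.add_apply, Pi.sub_apply, Pi.smul_apply, Algebra.smul_def,
        map_add, map_mul, Matrix.cons_val_zero, Matrix.cons_val_one, Matrix.head_cons,
        Matrix.cons_val_two, Matrix.tail_cons, Matrix.cons_val_three, Matrix.cons_val_fin_one,
        Fin.reduceFinMk, Pi.mul_apply, Pi.algebraMap_apply]
      field_simp [hZ]
      linear_combination (-(f abar)) * hms
    · simp only [ha, hb, ellOp, tens, Pi.add_apply, Pi.sub_apply, Pi.smul_apply, Algebra.smul_def,
        map_add, map_mul, Matrix.cons_val_zero, Matrix.cons_val_one, Matrix.head_cons,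
        Matrix.cons_val_two, Matrix.tail_cons, Matrix.cons_val_three, Matrix.cons_val_fin_one,
        Fin.reduceFinMk, Pi.mul_apply, Pi.algebraMap_apply]
      field_simp [hZ]
      linear_combination hms
  refine ⟨?_, ?_, ?_⟩
  · -- part 1: well-definedness
    rintro ⟨⟨x₁, x₂⟩, hx⟩
    obtain ⟨hx1, hx2⟩ := Submodule.mem_prod.mp hx
    obtain ⟨o, ho⟩ := hx1
    obtain ⟨m, hm, hfm⟩ := hx2
    obtain ⟨s, hs⟩ := Ideal.mem_span_singleton.mp (hsq ▸ Ideal.mul_mem_mul hm habar)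
    have hms : f m * f abar = f z * f s := by rw [← map_mul, ← map_mul, hs]
    have hco : ((⟨(x₁, x₂), hx⟩ : A) : K × K) = (f o, f m) :=
      Prod.ext ho.symm hfm.symm
    rw [hco]
    refine Submodule.mem_inf.mpr ⟨?_, ?_⟩
    · rw [hkey o m s hms]
      have hVA : ((0 : K), f m * f bbar) ∈ A :=
        Submodule.mem_prod.mpr ⟨zero_mem _,
          ⟨m * bbar, Ideal.mul_mem_right _ _ hm, map_mul (algebraMap O K) m bbar⟩⟩
      exact add_mem (Submodule.smul_mem _ _ hXAA)
        (sub_mem (hgen _ h1A _ hVA) (hgen _ hVA _ h1A))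
    · exact LinearMap.mem_ker.mpr (hkerall _)
  · -- part 2: injectivity
    intro x y hxy
    have hbne : b ≠ 0 := div_ne_zero hB hZ
    have h1 := congrFun hxy 1
    have h3 := congrFun hxy 3
    simp only [ellOp, hXhat, Matrix.cons_val_zero, Matrix.cons_val_one, Matrix.head_cons,
      Matrix.cons_val_two, Matrix.tail_cons, Matrix.cons_val_three, Matrix.cons_val_fin_one,
      zero_mul, mul_zero, zero_add, add_zero] at h1 h3
    have h2 : (x : K × K).2 = (y : K × K).2 := by
      have := mul_left_cancel₀ hbne h1
      exact mul_right_cancel₀ hZ this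
    have h1' : (x : K × K).1 = (y : K × K).1 := by
      rw [h2] at h3
      have h4 : (x : K × K).1 * f z = (y : K × K).1 * f z := by linear_combination h3
      exact mul_right_cancel₀ hZ h4
    exact Subtype.ext (Prod.ext h1' h2)
  · -- part 3: surjectivity
    have hAAprop : ∀ w ∈ AA, w 1 ∈ μK ∧
        w 3 ∈ Submodule.map (Algebra.linearMap O K) (Ideal.span {z} : Ideal O) := by
      intro w hw
      induction hw using Submodule.span_induction with
      | mem x h =>
        obtain ⟨p, hp, q, hq, rfl⟩ := h
        obtain ⟨hp1, hp2⟩ := Submodule.mem_prod.mp hp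
        obtain ⟨hq1, hq2⟩ := Submodule.mem_prod.mp hq
        obtain ⟨o, ho⟩ := hp1
        obtain ⟨m, hm, hfm⟩ := hp2
        obtain ⟨o', ho'⟩ := hq1
        obtain ⟨m', hm', hfm'⟩ := hq2
        constructor
        · exact ⟨o * m', Ideal.mul_mem_left _ _ hm', by
            simp only [tens, Matrix.cons_val_one, Matrix.head_cons]
            rw [← ho, ← hfm']
            exact map_mul (algebraMap O K) o m'⟩
        · exact ⟨m * m', hsq ▸ Ideal.mul_mem_mul hm hm', by
            simp only [tens, Matrix.cons_val_three, Matrix.tail_cons, Matrix.head_cons]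
            rw [← hfm, ← hfm']
            exact map_mul (algebraMap O K) m m'⟩
      | zero => simp
      | add x y hx hy ihx ihy =>
        exact ⟨by rw [Pi.add_apply]; exact add_mem ihx.1 ihy.1,
          by rw [Pi.add_apply]; exact add_mem ihx.2 ihy.2⟩
      | smul r x hx ih =>
        exact ⟨by rw [Pi.smul_apply]; exact Submodule.smul_mem _ _ ih.1,
          by rw [Pi.smul_apply]; exact Submodule.smul_mem _ _ ih.2⟩
    intro w hw
    obtain ⟨hwAA, hwker⟩ := Submodule.mem_inf.mp hw
    obtain ⟨hw1, hw3⟩ := hAAprop w hwAA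
    obtain ⟨m₁, hm₁, hfm₁⟩ := hw1
    obtain ⟨c, hc, hfc⟩ := hw3
    obtain ⟨t, ht⟩ := Ideal.mem_span_singleton.mp hc
    obtain ⟨β, hβ⟩ := hbbar
    set m₂ : O := (↑β⁻¹ : O) * m₁ with hm₂def
    have hm₂ : m₂ ∈ μ := Ideal.mul_mem_left _ _ hm₁
    have hm₂b : m₂ * bbar = m₁ := by
      rw [hm₂def, ← hβ, mul_comm ((↑β⁻¹ : O)) m₁, mul_assoc, Units.inv_mul, mul_one]
    obtain ⟨s, hs⟩ := Ideal.mem_span_singleton.mp (hsq ▸ Ideal.mul_mem_mul hm₂ habar)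
    have hker' : w 0 + b * w 3 = 0 ∧ w 1 + w 2 + a * w 3 = 0 := by
      have h0 := LinearMap.mem_ker.mp hwker
      rw [LinearMap.restrictScalars_apply, hmulMap, Prod.ext_iff] at h0
      simpa using h0
    have hfm₁' : f m₁ = w 1 := hfm₁
    have hfc' : f c = w 3 := hfc
    have e1 : f m₂ * f bbar = w 1 := by rw [← map_mul, hm₂b]; exact hfm₁'

    have e2 : f m₂ * f abar = f z * f s := by rw [← map_mul, ← map_mul, hs]
    have e3 : w 3 = f z * f t := by rw [← hfc', ht]; exact map_mul (algebraMap O K) z t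
    refine ⟨(f (t - s), f m₂),
      Submodule.mem_prod.mpr ⟨hmemO1 (t - s), hmemμK hm₂⟩, ?_⟩
    have hw0 : w 0 = -(b * w 3) := by linear_combination hker'.1
    have hw2 : w 2 = -(w 1) - a * w 3 := by linear_combination hker'.2
    have hwvec : w = ![-(b * w 3), w 1, -(w 1) - a * w 3, w 3] := by
      funext i
      fin_cases i
      · exact hw0
      · rfl
      · exact hw2
      · rfl
    have hts : f (t - s) = f t - f s := map_sub (algebraMap O K) t s
    rw [hXhat, hwvec]
    funext i
    fin_cases i
    · simp only [ha, hb, ellOp, Matrix.cons_val_zero, Matrix.cons_val_one, Matrix.head_cons,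
        Matrix.cons_val_two, Matrix.tail_cons, Matrix.cons_val_three, Matrix.cons_val_fin_one,
        map_sub, hts, e3, Pi.sub_apply, Matrix.cons_val', Matrix.empty_val', Fin.reduceFinMk]
      field_simp [hZ]
      linear_combination -e2
    · simp only [ha, hb, ellOp, Matrix.cons_val_zero, Matrix.cons_val_one, Matrix.head_cons,
        Matrix.cons_val_two, Matrix.tail_cons, Matrix.cons_val_three, Matrix.cons_val_fin_one,
        map_sub, hts, e3, Pi.sub_apply, Matrix.cons_val', Matrix.empty_val', Fin.reduceFinMk]
      field_simp [hZ]
      linear_combination e1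
    · simp only [ha, hb, ellOp, Matrix.cons_val_zero, Matrix.cons_val_one, Matrix.head_cons,
        Matrix.cons_val_two, Matrix.tail_cons, Matrix.cons_val_three, Matrix.cons_val_fin_one,
        map_sub, hts, e3, Pi.sub_apply, Matrix.cons_val', Matrix.empty_val', Fin.reduceFinMk]
      field_simp [hZ]
      linear_combination (-(f z)) * e1 + (-(f abar)) * e2
    · simp only [ha, hb, ellOp, Matrix.cons_val_zero, Matrix.cons_val_one, Matrix.head_cons,
        Matrix.cons_val_two, Matrix.tail_cons, Matrix.cons_val_three, Matrix.cons_val_fin_one,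
        map_sub, hts, e3, Pi.sub_apply, Matrix.cons_val', Matrix.empty_val', Fin.reduceFinMk]
      field_simp [hZ]
      linear_combination e2
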